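/- Let n = 2k−1 with k ≥ 2. For σ_1, σ_2 ∈ S_{n+1}, define f_σ as follows: with t = σ^{-1}(n+1), f_σ(X) = σ(X) if t ∉ X and f_σ(X) = ([n] \ σ(X \ {t})) if t ∈ X. Then f_{σ_1} ∘ f_{σ_2} = f_{σ_1 ∘ σ_2}, and hence Γ_{n+1} = {f_σ : σ ∈ S_{n+1}} is a subgroup of the automorphism group of H(2k−1,k) isomorphic to S_{n+1}. -/

import Mathlib

open Finset symmDiff

/-- The graph `H(n,k)` on subsets of `[n]`: `X ~ Y` iff `|X ∆ Y| = k`. -/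
def HGraph (n k : ℕ) : SimpleGraph (Finset (Fin n)) where
  Adj X Y := (X ∆ Y).card = k ∧ X ≠ Y
  symm := by
    refine ⟨fun X Y h => ?_⟩
    exact ⟨by rw [symmDiff_comm]; exact h.1, h.2.symm⟩
  loopless := ⟨fun X h => h.2 rfl⟩

/-- For `σ ∈ S_{n+1}` with `t = σ⁻¹(n+1)`: `f_σ(X) = σ(X)` if `t ∉ X`, and
`f_σ(X) = [n] \ σ(X \ {t})` if `t ∈ X`.  (Subsets of `[n]` are `Finset (Fin n)`; the
set `[n+1]` is modelled by `Fin (n+1)` with `n+1` corresponding to `Fin.last n`, and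
`t ∈ X` is equivalent to `Fin.last n ∈ σ(X)`.) -/
def fperm (n : ℕ) (σ : Equiv.Perm (Fin (n + 1))) (X : Finset (Fin n)) : Finset (Fin n) :=
  let Y := X.image (fun i => σ (Fin.castSucc i))
  if Fin.last n ∈ Y then Finset.univ.filter (fun i => Fin.castSucc i ∉ Y)
  else Finset.univ.filter (fun i => Fin.castSucc i ∈ Y)

namespace StmtAux

variable {n : ℕ}

/-- Embed a subset of `[n]` into `[n+1]`. -/
def ι (X : Finset (Fin n)) : Finset (Fin (n + 1)) := X.image Fin.castSucc

/-- Restrict a subset of `[n+1]` to `[n]`. -/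
def π (Z : Finset (Fin (n + 1))) : Finset (Fin n) :=
  Finset.univ.filter (fun i => Fin.castSucc i ∈ Z)

/-- Normalize: complement if `last` is a member. -/
def N (Z : Finset (Fin (n + 1))) : Finset (Fin (n + 1)) :=
  if Fin.last n ∈ Z then Zᶜ else Z

lemma last_not_mem_ι (X : Finset (Fin n)) : Fin.last n ∉ ι X := by
  simp only [ι, Finset.mem_image, not_exists]
  rintro i ⟨-, h⟩
  exact (Fin.castSucc_lt_last i).ne h

lemma last_not_mem_N (Z : Finset (Fin (n + 1))) : Fin.last n ∉ N Z := by
  unfold N; split <;> simp_all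

lemma N_eq_or (Z : Finset (Fin (n + 1))) : N Z = Z ∨ N Z = Zᶜ := by
  unfold N; split
  · exact Or.inr rfl
  · exact Or.inl rfl

lemma π_ι (X : Finset (Fin n)) : π (ι X) = X := by
  ext i
  simp [π, ι, Fin.castSucc_injective n |>.eq_iff]

lemma ι_π (Z : Finset (Fin (n + 1))) (h : Fin.last n ∉ Z) : ι (π Z) = Z := by
  ext j
  simp only [ι, π, Finset.mem_image, Finset.mem_filter, Finset.mem_univ, true_and]
  constructor
  · rintro ⟨i, hi, rfl⟩; exact hi
  · intro hj
    rcases Fin.eq_castSucc_or_eq_last j with ⟨i, rfl⟩ | rfl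
    · exact ⟨i, hj, rfl⟩
    · exact absurd hj h

lemma image_compl (σ : Equiv.Perm (Fin (n + 1))) (Z : Finset (Fin (n + 1))) :
    Zᶜ.image σ = (Z.image σ)ᶜ := by
  ext j
  simp only [Finset.mem_image, Finset.mem_compl]
  constructor
  · rintro ⟨i, hi, rfl⟩ ⟨i', hi', h⟩
    exact hi (σ.injective h ▸ hi')
  · intro h
    exact ⟨σ.symm j, fun hs => h ⟨σ.symm j, hs, σ.apply_symm_apply j⟩, σ.apply_symm_apply j⟩

lemma N_image_N (σ : Equiv.Perm (Fin (n + 1))) (Z : Finset (Fin (n + 1))) :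
    N ((N Z).image σ) = N (Z.image σ) := by
  unfold N
  by_cases hZ : Fin.last n ∈ Z
  · simp only [hZ, if_true, image_compl]
    by_cases hσ : Fin.last n ∈ Z.image σ
    · simp [hσ]
    · simp [hσ]
  · simp [hZ]

lemma fperm_eq (σ : Equiv.Perm (Fin (n + 1))) (X : Finset (Fin n)) :
    fperm n σ X = π (N ((ι X).image σ)) := by
  have him : X.image (fun i => σ (Fin.castSucc i)) = (ι X).image σ := by
    simp [ι, Finset.image_image]; rfl
  unfold fperm N π
  rw [him]
  by_cases h : Fin.last n ∈ (ι X).image σ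
  · simp only [h, if_true]
    ext i; simp
  · simp only [h, if_false]

lemma fperm_comp (σ₁ σ₂ : Equiv.Perm (Fin (n + 1))) (X : Finset (Fin n)) :
    fperm n σ₁ (fperm n σ₂ X) = fperm n (σ₁ * σ₂) X := by
  rw [fperm_eq, fperm_eq, fperm_eq, ι_π _ (last_not_mem_N _), N_image_N,
    Finset.image_image]
  rfl

lemma fperm_one (X : Finset (Fin n)) : fperm n 1 X = X := by
  rw [fperm_eq]
  have : (ι X).image (1 : Equiv.Perm (Fin (n + 1))) = ι X := by simp
  rw [this]
  have : N (ι X) = ι X := by unfold N; simp [last_not_mem_ι]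
  rw [this, π_ι]

/-- `fperm` as an equivalence. -/
def fpermEquiv (σ : Equiv.Perm (Fin (n + 1))) : Finset (Fin n) ≃ Finset (Fin n) where
  toFun := fperm n σ
  invFun := fperm n σ⁻¹
  left_inv X := by rw [fperm_comp, inv_mul_cancel, fperm_one]
  right_inv X := by rw [fperm_comp, mul_inv_cancel, fperm_one]

lemma π_symmDiff (Z W : Finset (Fin (n + 1))) : π Z ∆ π W = π (Z ∆ W) := by
  ext i
  simp [π, Finset.mem_symmDiff]

lemma card_π (Z : Finset (Fin (n + 1))) (h : Fin.last n ∉ Z) : (π Z).card = Z.card := by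
  rw [← ι_π Z h, π_ι, ι, Finset.card_image_of_injective _ (Fin.castSucc_injective n)]

lemma card_image_symmDiff (σ : Equiv.Perm (Fin (n + 1))) (X Y : Finset (Fin n)) :
    ((ι X).image σ ∆ (ι Y).image σ).card = (X ∆ Y).card := by
  unfold ι
  rw [← Finset.image_symmDiff _ _ σ.injective, ← Finset.image_symmDiff _ _
    (Fin.castSucc_injective n)]
  rw [Finset.card_image_of_injective _ σ.injective,
    Finset.card_image_of_injective _ (Fin.castSucc_injective n)]

lemma compl_symmDiff_left (A B : Finset (Fin (n + 1))) : Aᶜ ∆ B = (A ∆ B)ᶜ := by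
  ext j; simp only [Finset.mem_symmDiff, Finset.mem_compl]; tauto

lemma compl_symmDiff_right (A B : Finset (Fin (n + 1))) : A ∆ Bᶜ = (A ∆ B)ᶜ := by
  ext j; simp only [Finset.mem_symmDiff, Finset.mem_compl]; tauto

lemma compl_symmDiff_compl (A B : Finset (Fin (n + 1))) : Aᶜ ∆ Bᶜ = A ∆ B := by
  ext j; simp only [Finset.mem_symmDiff, Finset.mem_compl]; tauto

lemma key {k : ℕ} (hnk : n + 1 = 2 * k) (σ : Equiv.Perm (Fin (n + 1)))
    {X Y : Finset (Fin n)} (h : (X ∆ Y).card = k) :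
    (fperm n σ X ∆ fperm n σ Y).card = k := by
  rw [fperm_eq, fperm_eq, π_symmDiff]
  set A := (ι X).image σ with hA
  set B := (ι Y).image σ with hB
  have hAB : (A ∆ B).card = k := by rw [hA, hB, card_image_symmDiff, h]
  have hABle : (A ∆ B).card ≤ n + 1 := by
    calc (A ∆ B).card ≤ Fintype.card (Fin (n + 1)) := Finset.card_le_univ _
    _ = n + 1 := Fintype.card_fin _
  have hlast : Fin.last n ∉ N A ∆ N B :=  by
    simp only [Finset.mem_symmDiff]
    rintro (⟨h1, -⟩ | ⟨h1, -⟩) <;> exact last_not_mem_N _ h1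
  rw [card_π _ hlast]
  have hcompl : ∀ C : Finset (Fin (n + 1)), Cᶜ.card = n + 1 - C.card := by
    intro C; rw [Finset.card_compl, Fintype.card_fin]
  rcases N_eq_or A with h1 | h1 <;> rcases N_eq_or B with h2 | h2 <;> rw [h1, h2]
  · exact hAB
  · rw [compl_symmDiff_right, hcompl, hAB]; omega
  · rw [compl_symmDiff_left, hcompl, hAB]; omega
  · rw [compl_symmDiff_compl]; exact hAB

/-- `fperm` as a graph automorphism of `H(n, k)` when `n + 1 = 2k`. -/
def fpermIso {k : ℕ} (hnk : n + 1 = 2 * k) (σ : Equiv.Perm (Fin (n + 1))) :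
    HGraph n k ≃g HGraph n k where
  toEquiv := fpermEquiv σ
  map_rel_iff' := by
    intro X Y
    show ((fperm n σ X ∆ fperm n σ Y).card = k ∧ fperm n σ X ≠ fperm n σ Y) ↔ _
    constructor
    · rintro ⟨hc, hne⟩
      refine ⟨?_, fun h => hne (h ▸ rfl)⟩
      have := key hnk σ⁻¹ hc
      rwa [fperm_comp, fperm_comp, inv_mul_cancel, fperm_one, fperm_one] at this
    · rintro ⟨hc, hne⟩
      exact ⟨key hnk σ hc, fun h => hne ((fpermEquiv σ).injective h)⟩

lemma fperm_injective {k : ℕ} (hk : 2 ≤ k) (hnk : n + 1 = 2 * k)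
    (σ : Equiv.Perm (Fin (n + 1))) (hσ : ∀ X : Finset (Fin n), fperm n σ X = X) :
    σ = 1 := by
  have hn3 : 3 ≤ n := by omega
  have hcast : ∀ i : Fin n, σ (Fin.castSucc i) = Fin.castSucc i := by
    intro i
    have h := hσ {i}
    unfold fperm at h
    simp only [Finset.image_singleton] at h
    by_cases hl : Fin.last n ∈ ({σ (Fin.castSucc i)} : Finset (Fin (n + 1)))
    · rw [if_pos hl] at h
      simp only [Finset.mem_singleton] at hl
      exfalso
      have : (Finset.univ.filter
          (fun j : Fin n => Fin.castSucc j ∉ ({σ (Fin.castSucc i)} : Finset (Fin (n + 1))))) =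
          Finset.univ := by
        ext j
        simp only [Finset.mem_filter, Finset.mem_univ, true_and, Finset.mem_singleton, iff_true]
        rw [← hl]
        exact (Fin.castSucc_lt_last j).ne
      rw [this] at h
      have := congrArg Finset.card h
      simp only [Finset.card_univ, Fintype.card_fin, Finset.card_singleton] at this
      omega
    · rw [if_neg hl] at h
      have hi : i ∈ (Finset.univ.filter
          (fun j : Fin n => Fin.castSucc j ∈ ({σ (Fin.castSucc i)} : Finset (Fin (n + 1))))) := by
        rw [h]; exact Finset.mem_singleton_self i
      simp only [Finset.mem_filter, Finset.mem_singleton] at hi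
      exact hi.2.symm
  have hlast : σ (Fin.last n) = Fin.last n := by
    rcases Fin.eq_castSucc_or_eq_last (σ (Fin.last n)) with ⟨i, hi⟩ | hl
    · exfalso
      have := σ.injective (hi.trans (hcast i).symm)
      exact (Fin.castSucc_lt_last i).ne' this
    · exact hl
  ext j
  rcases Fin.eq_castSucc_or_eq_last j with ⟨i, rfl⟩ | rfl
  · simp [hcast i]
  · simp [hlast]

end StmtAux

open StmtAux in
/-- For `n = 2k - 1`, `k ≥ 2`: `f_{σ₁} ∘ f_{σ₂} = f_{σ₁ ∘ σ₂}`, and hence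
`Γ_{n+1} = {f_σ : σ ∈ S_{n+1}}` is a subgroup of `Aut(H(2k-1,k))` isomorphic to
`S_{n+1}` (an injective group homomorphism `S_{n+1} →* Aut(H(2k-1,k))` whose image
consists exactly of the maps `f_σ`). -/
theorem stmt_4 (k n : ℕ) (hk : 2 ≤ k) (hn : n = 2 * k - 1) :
    (∀ (σ₁ σ₂ : Equiv.Perm (Fin (n + 1))) (X : Finset (Fin n)),
      fperm n σ₁ (fperm n σ₂ X) = fperm n (σ₁ * σ₂) X) ∧
    (∃ φ : Equiv.Perm (Fin (n + 1)) →* (HGraph n k ≃g HGraph n k),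
      Function.Injective φ ∧ ∀ (σ : Equiv.Perm (Fin (n + 1))) (X : Finset (Fin n)),
        (φ σ) X = fperm n σ X) := by
  have hnk : n + 1 = 2 * k := by omega
  refine ⟨fun σ₁ σ₂ X => fperm_comp σ₁ σ₂ X, ?_⟩
  refine ⟨{ toFun := fpermIso hnk
            map_one' := RelIso.ext fun X => fperm_one X
            map_mul' := fun σ₁ σ₂ => RelIso.ext fun X => (fperm_comp σ₁ σ₂ X).symm }, ?_, ?_⟩
  · rw [injective_iff_map_eq_one]
    intro σ hσ
    refine fperm_injective hk hnk σ fun X => ?_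
    have := congrArg (fun (f : HGraph n k ≃g HGraph n k) => f X) hσ
    simp at this
    exact this
  · intro σ X
    rfl
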